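/- Let D be a division ring with derivation δ. Any ring automorphism H of D[t;δ] that restricts to an automorphism of D and fixes a polynomial f ∈ D[t;δ] of degree m ≥ 1 induces an automorphism of the nonassociative algebra S_f = D[t;δ]/D[t;δ]f (with multiplication g∘h = gh mod_r f). More generally, any such automorphism H induces an isomorphism S_f ≅ S_{H(f)}. -/

import Mathlib

/-- A differential (Ore) polynomial ring `D[t;δ]`: a ring containing `D` via the
ring embedding `ι`, with an element `t` satisfying `t·a = a·t + δ(a)`, and which is
freely spanned as a left `D`-module by the powers of `t` (via `rep`). -/
structure DiffPolyRing (D : Type*) [Ring D] (δ : D → D) where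
  carrier : Type*
  [ring : Ring carrier]
  ι : D →+* carrier
  t : carrier
  tcomm : ∀ a : D, t * ι a = ι a * t + ι (δ a)
  rep : carrier ≃+ (ℕ →₀ D)
  rep_symm_apply : ∀ c : ℕ →₀ D, rep.symm c = c.sum fun i a => ι a * t ^ i

attribute [instance] DiffPolyRing.ring

namespace DiffPolyRing

variable {D : Type*} [Ring D] {δ : D → D}

/-- The degree of a differential polynomial, with `deg 0 = ⊥`. -/
noncomputable def deg (P : DiffPolyRing D δ) (p : P.carrier) : WithBot ℕ :=
  (P.rep p).support.max

end DiffPolyRing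

namespace DiffPolyRing

variable {D : Type*} [Ring D] {δ : D → D}

variable (P : DiffPolyRing D δ)

lemma rep_single (a : D) (i : ℕ) : P.rep (P.ι a * P.t ^ i) = Finsupp.single i a := by
  have h : P.rep.symm (Finsupp.single i a) = P.ι a * P.t ^ i := by
    rw [P.rep_symm_apply, Finsupp.sum_single_index]
    simp
  rw [← h, AddEquiv.apply_symm_apply]

lemma self_eq_sum (p : P.carrier) : p = (P.rep p).sum fun i a => P.ι a * P.t ^ i := by
  conv_lhs => rw [← P.rep.symm_apply_apply p]
  rw [P.rep_symm_apply]

lemma le_deg {p : P.carrier} {n : ℕ} (h : P.rep p n ≠ 0) : (n : WithBot ℕ) ≤ P.deg p :=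
  Finset.le_max (Finsupp.mem_support_iff.2 h)

lemma coeff_eq_zero_of_deg_lt {p : P.carrier} {n : ℕ} (h : P.deg p < (n : WithBot ℕ)) :
    P.rep p n = 0 := by
  by_contra hc
  exact absurd (P.le_deg hc) (not_le.2 h)

lemma deg_eq_bot_iff {p : P.carrier} : P.deg p = ⊥ ↔ p = 0 := by
  unfold deg
  rw [Finset.max_eq_bot, Finsupp.support_eq_empty]
  exact ⟨fun h => P.rep.injective (by simp [h]), fun h => by simp [h]⟩

lemma deg_zero : P.deg 0 = ⊥ := P.deg_eq_bot_iff.2 rfl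

lemma deg_add_le (p q : P.carrier) : P.deg (p + q) ≤ max (P.deg p) (P.deg q) := by
  unfold deg
  rw [map_add]
  calc ((P.rep p + P.rep q).support).max ≤ ((P.rep p).support ∪ (P.rep q).support).max :=
        Finset.max_mono Finsupp.support_add
    _ = (P.rep p).support.max ⊔ (P.rep q).support.max := Finset.max_union
    _ ≤ _ := sup_le (le_max_left _ _) (le_max_right _ _)

lemma deg_neg (p : P.carrier) : P.deg (-p) = P.deg p := by
  unfold deg
  rw [map_neg, Finsupp.support_neg]

lemma deg_sub_le (p q : P.carrier) : P.deg (p - q) ≤ max (P.deg p) (P.deg q) := by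
  rw [sub_eq_add_neg]
  simpa [P.deg_neg] using P.deg_add_le p (-q)

lemma deg_sum_le {ι' : Type*} (s : Finset ι') (g : ι' → P.carrier) {b : WithBot ℕ}
    (h : ∀ i ∈ s, P.deg (g i) ≤ b) : P.deg (∑ i ∈ s, g i) ≤ b := by
  induction s using Finset.cons_induction with
  | empty => simp [P.deg_zero]
  | cons x s hx ih =>
      rw [Finset.sum_cons]
      exact le_trans (P.deg_add_le _ _)
        (max_le (h _ (Finset.mem_cons_self _ _)) (ih fun i hi => h i (Finset.mem_cons_of_mem hi)))

lemma deg_single_le (a : D) (i : ℕ) : P.deg (P.ι a * P.t ^ i) ≤ (i : WithBot ℕ) := by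
  unfold deg
  rw [P.rep_single]
  calc (Finsupp.single i a).support.max ≤ ({i} : Finset ℕ).max :=
        Finset.max_mono Finsupp.support_single_subset
    _ = (i : WithBot ℕ) := by rw [Finset.max_singleton, Nat.cast_withBot]

lemma deg_single {a : D} (ha : a ≠ 0) (i : ℕ) : P.deg (P.ι a * P.t ^ i) = (i : WithBot ℕ) := by
  unfold deg
  rw [P.rep_single, Finsupp.support_single_ne_zero _ ha, Finset.max_singleton, Nat.cast_withBot]

lemma deg_iota_le (a : D) : P.deg (P.ι a) ≤ (0 : WithBot ℕ) := by
  simpa using P.deg_single_le a 0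

lemma deg_iota {a : D} (ha : a ≠ 0) : P.deg (P.ι a) = (0 : WithBot ℕ) := by
  simpa using P.deg_single ha 0

lemma deg_t_mul_le (p : P.carrier) : P.deg (P.t * p) ≤ P.deg p + 1 := by
  nth_rewrite 1 [P.self_eq_sum p]
  rw [Finsupp.sum, Finset.mul_sum]
  refine P.deg_sum_le _ _ fun i hi => ?_
  have hco : P.t * (P.ι (P.rep p i) * P.t ^ i)
      = P.ι (P.rep p i) * P.t ^ (i + 1) + P.ι (δ (P.rep p i)) * P.t ^ i := by
    rw [← mul_assoc, P.tcomm, add_mul, mul_assoc, ← pow_succ']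
  rw [hco]
  have hi' : (i : WithBot ℕ) ≤ P.deg p := Finset.le_max hi
  refine le_trans (P.deg_add_le _ _) (max_le ?_ ?_)
  · refine le_trans (P.deg_single_le _ _) ?_
    rw [Nat.cast_add, Nat.cast_one]
    exact add_le_add_left hi' 1
  · refine le_trans (P.deg_single_le _ _) (le_trans hi' ?_)
    simpa using add_le_add_right (zero_le_one (α := WithBot ℕ)) (P.deg p)

lemma deg_mul_t_pow_le (p : P.carrier) (m : ℕ) :
    P.deg (p * P.t ^ m) ≤ P.deg p + (m : WithBot ℕ) := by
  nth_rewrite 1 [P.self_eq_sum p]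
  rw [Finsupp.sum, Finset.sum_mul]
  refine P.deg_sum_le _ _ fun i hi => ?_
  rw [mul_assoc, ← pow_add]
  refine le_trans (P.deg_single_le _ _) ?_
  rw [Nat.cast_add]
  exact add_le_add_left (Finset.le_max hi) _

lemma deg_iota_mul_le (a : D) (p : P.carrier) : P.deg (P.ι a * p) ≤ P.deg p := by
  nth_rewrite 1 [P.self_eq_sum p]
  rw [Finsupp.sum, Finset.mul_sum]
  refine P.deg_sum_le _ _ fun i hi => ?_
  rw [← mul_assoc, ← map_mul]
  exact le_trans (P.deg_single_le _ _) (Finset.le_max hi)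

lemma tpow_comm (a : D) (i : ℕ) :
    ∃ r, P.deg r < (i : WithBot ℕ) ∧ P.t ^ i * P.ι a = P.ι a * P.t ^ i + r := by
  induction i with
  | zero =>
      refine ⟨0, ?_, by simp⟩
      rw [P.deg_zero]
      exact bot_lt_iff_ne_bot.2 (by simp)
  | succ i ih =>
      obtain ⟨r, hr, he⟩ := ih
      refine ⟨P.ι (δ a) * P.t ^ i + P.t * r, ?_, ?_⟩
      · refine lt_of_le_of_lt (P.deg_add_le _ _) (max_lt ?_ ?_)
        · exact lt_of_le_of_lt (P.deg_single_le _ _) (by exact_mod_cast Nat.lt_succ_self i)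
        · refine lt_of_le_of_lt (P.deg_t_mul_le _) ?_
          have : ((i : ℕ) : WithBot ℕ) + 1 = ((i + 1 : ℕ) : WithBot ℕ) := by push_cast; ring
          rw [← this]
          exact WithBot.add_lt_add_right (by simp) hr
      · rw [pow_succ', mul_assoc, he, mul_add, ← mul_assoc, P.tcomm, add_mul, mul_assoc,
          ← pow_succ']
        ring_nf
        abel

lemma single_mul_single (a b : D) (n m : ℕ) :
    ∃ s, P.deg s < ((n + m : ℕ) : WithBot ℕ) ∧
      (P.ι a * P.t ^ n) * (P.ι b * P.t ^ m) = P.ι (a * b) * P.t ^ (n + m) + s := by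
  obtain ⟨r, hr, he⟩ := P.tpow_comm b n
  refine ⟨P.ι a * r * P.t ^ m, ?_, ?_⟩
  · refine lt_of_le_of_lt (P.deg_mul_t_pow_le _ _) ?_
    have h1 : P.deg (P.ι a * r) + (m : WithBot ℕ) ≤ P.deg r + (m : WithBot ℕ) :=
      add_le_add_left (P.deg_iota_mul_le _ _) _
    refine lt_of_le_of_lt h1 ?_
    have : ((n + m : ℕ) : WithBot ℕ) = (n : WithBot ℕ) + (m : WithBot ℕ) := by push_cast; ring
    rw [this]
    exact WithBot.add_lt_add_right (by simp) hr
  · calc (P.ι a * P.t ^ n) * (P.ι b * P.t ^ m) = P.ι a * (P.t ^ n * P.ι b) * P.t ^ m := by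
          rw [mul_assoc, mul_assoc, mul_assoc]
      _ = P.ι a * (P.ι b * P.t ^ n + r) * P.t ^ m := by rw [he]
      _ = P.ι (a * b) * P.t ^ (n + m) + P.ι a * r * P.t ^ m := by
          rw [map_mul, pow_add, mul_add, add_mul]
          congr 1
          simp [mul_assoc]

lemma deg_mul_le (p q : P.carrier) : P.deg (p * q) ≤ P.deg p + P.deg q := by
  nth_rewrite 1 [P.self_eq_sum p, P.self_eq_sum q]
  rw [Finsupp.sum, Finsupp.sum, Finset.sum_mul_sum]
  refine P.deg_sum_le _ _ fun i hi => P.deg_sum_le _ _ fun j hj => ?_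
  obtain ⟨s, hs, he⟩ := P.single_mul_single (P.rep p i) (P.rep q j) i j
  rw [he]
  have hb : ((i + j : ℕ) : WithBot ℕ) ≤ P.deg p + P.deg q := by
    push_cast
    exact add_le_add (Finset.le_max hi) (Finset.le_max hj)
  exact le_trans (P.deg_add_le _ _) (max_le (le_trans (P.deg_single_le _ _) hb)
    (le_trans hs.le hb))

lemma coeff_mul (p q : P.carrier) {n m : ℕ} (hp : P.deg p ≤ (n : WithBot ℕ))
    (hq : P.deg q ≤ (m : WithBot ℕ)) :
    P.rep (p * q) (n + m) = P.rep p n * P.rep q m := by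
  have hpq : p * q = ∑ i ∈ (P.rep p).support, ∑ j ∈ (P.rep q).support,
      (P.ι (P.rep p i) * P.t ^ i) * (P.ι (P.rep q j) * P.t ^ j) := by
    nth_rewrite 1 [P.self_eq_sum p, P.self_eq_sum q]
    rw [Finsupp.sum, Finsupp.sum, Finset.sum_mul_sum]
  have key : ∀ i ∈ (P.rep p).support, ∀ j ∈ (P.rep q).support,
      P.rep ((P.ι (P.rep p i) * P.t ^ i) * (P.ι (P.rep q j) * P.t ^ j)) (n + m)
        = if i = n then (if j = m then P.rep p n * P.rep q m else 0) else 0 := by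
    intro i hi j hj
    have hin : i ≤ n := by
      have h4 := le_trans (Finset.le_max hi) hp
      rw [Nat.cast_withBot] at h4
      exact WithBot.coe_le_coe.1 h4
    have hjm : j ≤ m := by
      have h4 := le_trans (Finset.le_max hj) hq
      rw [Nat.cast_withBot] at h4
      exact WithBot.coe_le_coe.1 h4
    obtain ⟨s, hs, he⟩ := P.single_mul_single (P.rep p i) (P.rep q j) i j
    rw [he, map_add P.rep, Finsupp.add_apply, P.rep_single,
      P.coeff_eq_zero_of_deg_lt (lt_of_lt_of_le hs (by exact_mod_cast Nat.add_le_add hin hjm)),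
      add_zero, Finsupp.single_apply]
    by_cases h1 : i = n
    · by_cases h2 : j = m
      · subst h1; subst h2; simp
      · have h3 : ¬ (i + j = n + m) := by omega
        simp [h1, h2, h3]
    · have h3 : ¬ (i + j = n + m) := by omega
      simp [h1, h3]
  have inner : ∀ i, (∑ j ∈ (P.rep q).support,
      if i = n then (if j = m then P.rep p n * P.rep q m else 0) else 0)
        = if i = n then P.rep p n * P.rep q m else 0 := by
    intro i
    by_cases h1 : i = n
    · simp only [h1, if_true]
      rw [Finset.sum_ite_eq' (P.rep q).support m (fun _ => P.rep p n * P.rep q m)]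
      by_cases h2 : m ∈ (P.rep q).support
      · simp [h2]
      · rw [if_neg h2, Finsupp.notMem_support_iff.1 h2, mul_zero]
    · simp [h1]
  calc P.rep (p * q) (n + m)
      = ∑ i ∈ (P.rep p).support, ∑ j ∈ (P.rep q).support,
          P.rep ((P.ι (P.rep p i) * P.t ^ i) * (P.ι (P.rep q j) * P.t ^ j)) (n + m) := by
        rw [hpq, map_sum, Finsupp.finset_sum_apply]
        exact Finset.sum_congr rfl fun i _ => by rw [map_sum, Finsupp.finset_sum_apply]
    _ = ∑ i ∈ (P.rep p).support, if i = n then P.rep p n * P.rep q m else 0 := by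
        refine Finset.sum_congr rfl fun i hi => ?_
        rw [Finset.sum_congr rfl (key i hi), inner i]
    _ = P.rep p n * P.rep q m := by
        rw [Finset.sum_ite_eq' (P.rep p).support n (fun _ => P.rep p n * P.rep q m)]
        by_cases h2 : n ∈ (P.rep p).support
        · simp [h2]
        · rw [if_neg h2, Finsupp.notMem_support_iff.1 h2, zero_mul]


end DiffPolyRing

namespace DiffPolyRing

variable {D : Type*} [DivisionRing D] {δ : D → D} (P : DiffPolyRing D δ)

lemma exists_deg_eq {p : P.carrier} (hp : p ≠ 0) : ∃ n : ℕ, P.deg p = (n : WithBot ℕ) := by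
  have h : P.deg p ≠ ⊥ := fun h => hp (P.deg_eq_bot_iff.1 h)
  obtain ⟨b, hb⟩ := WithBot.ne_bot_iff_exists.1 h
  exact ⟨b, by rw [Nat.cast_withBot]; exact hb.symm⟩

lemma coeff_deg_ne_zero {p : P.carrier} {n : ℕ} (h : P.deg p = (n : WithBot ℕ)) :
    P.rep p n ≠ 0 := by
  have h2 : (P.rep p).support.max = (WithBot.some n) := by
    rw [← Nat.cast_withBot]; exact h
  exact Finsupp.mem_support_iff.1 (Finset.mem_of_max h2)

lemma deg_mul {p q : P.carrier} (hp : p ≠ 0) (hq : q ≠ 0) :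
    P.deg (p * q) = P.deg p + P.deg q := by
  obtain ⟨n, hn⟩ := P.exists_deg_eq hp
  obtain ⟨m, hm⟩ := P.exists_deg_eq hq
  have h1 : P.rep (p * q) (n + m) ≠ 0 := by
    rw [P.coeff_mul p q hn.le hm.le]
    exact mul_ne_zero (P.coeff_deg_ne_zero hn) (P.coeff_deg_ne_zero hm)
  have h2 := P.deg_mul_le p q
  rw [hn, hm] at h2 ⊢
  refine le_antisymm h2 ?_
  have h3 := P.le_deg h1
  rw [Nat.cast_add] at h3
  exact h3

lemma deg_t : P.deg P.t = (1 : WithBot ℕ) := by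
  have h := P.deg_single (one_ne_zero (α := D)) 1
  simpa using h

lemma deg_one : P.deg (1 : P.carrier) = (0 : WithBot ℕ) := by
  have h := P.deg_single (one_ne_zero (α := D)) 0
  simpa using h

lemma one_ne_zero' : (1 : P.carrier) ≠ 0 := fun h => by
  have h2 := P.deg_one
  rw [h, P.deg_zero] at h2
  simp at h2

lemma t_ne_zero : P.t ≠ 0 := fun h => by
  have h2 := P.deg_t
  rw [h, P.deg_zero] at h2
  exact WithBot.one_ne_bot h2.symm

lemma deg_add_eq {x y : P.carrier} (h : P.deg y < P.deg x) : P.deg (x + y) = P.deg x := by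
  refine le_antisymm (le_trans (P.deg_add_le _ _) (max_le le_rfl h.le)) ?_
  have hx : x = (x + y) + (-y) := by abel
  have h2 : P.deg x ≤ max (P.deg (x + y)) (P.deg y) := by
    calc P.deg x = P.deg ((x + y) + (-y)) := by rw [← hx]
      _ ≤ max (P.deg (x + y)) (P.deg (-y)) := P.deg_add_le _ _
      _ = max (P.deg (x + y)) (P.deg y) := by rw [P.deg_neg]
  rcases max_cases (P.deg (x + y)) (P.deg y) with ⟨h3, _⟩ | ⟨h3, _⟩
  · rwa [h3] at h2
  · exact absurd (lt_of_le_of_lt (h2.trans h3.le) h) (lt_irrefl _)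

lemma eq_iota_of_deg_le_zero {x : P.carrier} (h : P.deg x ≤ (0 : WithBot ℕ)) :
    ∃ c, x = P.ι c := by
  refine ⟨P.rep x 0, ?_⟩
  have hrep : P.rep x = Finsupp.single 0 (P.rep x 0) := by
    ext n
    match n with
    | 0 => simp
    | Nat.succ k =>
        rw [P.coeff_eq_zero_of_deg_lt (lt_of_le_of_lt h (by exact_mod_cast Nat.succ_pos k))]
        simp
  apply P.rep.injective
  rw [hrep]
  have := P.rep_single (P.rep x 0) 0
  simpa using this.symm

lemma mod_unique {f₀ : P.carrier} (modf : P.carrier → P.carrier)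
    (hmod : ∀ g, P.deg (modf g) < P.deg f₀ ∧ ∃ q, g = q * f₀ + modf g)
    {g q r : P.carrier} (hr : P.deg r < P.deg f₀) (he : g = q * f₀ + r) : modf g = r := by
  obtain ⟨hd, q', he'⟩ := hmod g
  have hf0 : f₀ ≠ 0 := by
    intro h
    rw [h, P.deg_zero] at hr
    exact absurd hr (not_lt_bot)
  have heq : q * f₀ + r = q' * f₀ + modf g := he.symm.trans he'
  have hsub : (q - q') * f₀ = modf g - r := by
    calc (q - q') * f₀ = (q * f₀ + r) - (q' * f₀ + r) := by rw [sub_mul]; abel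
      _ = (q' * f₀ + modf g) - (q' * f₀ + r) := by rw [heq]
      _ = modf g - r := by abel
  by_cases hqq : q - q' = 0
  · rw [hqq, zero_mul] at hsub
    exact sub_eq_zero.1 hsub.symm
  · exfalso
    have hdm := P.deg_mul hqq hf0
    obtain ⟨k, hk⟩ := P.exists_deg_eq hqq
    obtain ⟨mm, hmm⟩ := P.exists_deg_eq hf0
    have hlt : P.deg (modf g - r) < P.deg f₀ := lt_of_le_of_lt (P.deg_sub_le _ _) (max_lt hd hr)
    rw [← hsub, hdm, hk, hmm] at hlt
    have : (k + mm : ℕ) < mm := by exact_mod_cast hlt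
    omega

lemma nontrivial_carrier : Nontrivial P.carrier := ⟨⟨1, 0, P.one_ne_zero'⟩⟩

lemma iota_ne_zero {a : D} (ha : a ≠ 0) : P.ι a ≠ 0 := by
  haveI := P.nontrivial_carrier
  exact fun h => ha (RingHom.injective P.ι (h.trans (map_zero P.ι).symm))

lemma map_eq_sum (H : P.carrier ≃+* P.carrier) (p : P.carrier) :
    H p = ∑ i ∈ (P.rep p).support, H (P.ι (P.rep p i)) * (H P.t) ^ i := by
  nth_rewrite 1 [P.self_eq_sum p]
  rw [Finsupp.sum, map_sum]
  exact Finset.sum_congr rfl fun i _ => by rw [map_mul, map_pow]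

lemma deg_map_t_pos (H : P.carrier ≃+* P.carrier)
    (hres : ∀ a : D, ∃ b : D, H (P.ι a) = P.ι b) :
    (1 : WithBot ℕ) ≤ P.deg (H P.t) := by
  by_contra hlt
  rw [not_le] at hlt
  have hle : P.deg (H P.t) ≤ (0 : WithBot ℕ) := by
    rcases eq_or_ne (P.deg (H P.t)) ⊥ with h | h
    · rw [h]; exact bot_le
    · obtain ⟨k, hk⟩ := WithBot.ne_bot_iff_exists.1 h
      rw [← hk, ← Nat.cast_withBot] at hlt ⊢
      have hk1 : k < 1 := by exact_mod_cast hlt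
      exact_mod_cast Nat.le_of_lt_succ hk1
  obtain ⟨c, hc⟩ := P.eq_iota_of_deg_le_zero hle
  have hall : ∀ p, ∃ e, H p = P.ι e := by
    intro p
    suffices h : H p ∈ P.ι.range by
      obtain ⟨e, he⟩ := h
      exact ⟨e, he.symm⟩
    rw [P.map_eq_sum H p]
    refine Subring.sum_mem _ fun i _ => ?_
    refine Subring.mul_mem _ ?_ (Subring.pow_mem _ ?_ i)
    · obtain ⟨bi, hbi⟩ := hres (P.rep p i)
      exact ⟨bi, hbi.symm⟩
    · exact ⟨c, hc.symm⟩
  obtain ⟨e, he⟩ := hall (H.symm P.t)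
  rw [RingEquiv.apply_symm_apply] at he
  have h1 := P.deg_t
  rw [he] at h1
  have h0 := P.deg_iota_le e
  rw [h1] at h0
  exact absurd h0 (by simp)

lemma deg_pow {x : P.carrier} (hx : x ≠ 0) {d : ℕ} (hd : P.deg x = (d : WithBot ℕ)) (i : ℕ) :
    P.deg (x ^ i) = ((d * i : ℕ) : WithBot ℕ) ∧ x ^ i ≠ 0 := by
  induction i with
  | zero => simp [P.deg_one, P.one_ne_zero']
  | succ i ih =>
      have h1 : P.deg (x ^ i * x) = ((d * i : ℕ) : WithBot ℕ) + (d : WithBot ℕ) := by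
        rw [P.deg_mul ih.2 hx, ih.1, hd]
      rw [pow_succ]
      constructor
      · rw [h1]; push_cast; ring
      · intro h
        rw [h, P.deg_zero] at h1
        have : ((d * i : ℕ) : WithBot ℕ) + (d : WithBot ℕ) ≠ ⊥ := by
          rw [Nat.cast_withBot, Nat.cast_withBot, ← WithBot.coe_add]
          exact WithBot.coe_ne_bot
        exact this h1.symm

lemma deg_map_aux (H : P.carrier ≃+* P.carrier)
    (hres : ∀ a : D, ∃ b : D, H (P.ι a) = P.ι b)
    {d : ℕ} (hd : P.deg (H P.t) = (d : WithBot ℕ)) (hd1 : 1 ≤ d) :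
    ∀ (p : P.carrier) (n : ℕ), P.deg p = (n : WithBot ℕ) →
      P.deg (H p) = ((d * n : ℕ) : WithBot ℕ) := by
  haveI := P.nontrivial_carrier
  have hHt : H P.t ≠ 0 := fun h => by
    rw [h, P.deg_zero] at hd
    exact WithBot.coe_ne_bot (by rw [← Nat.cast_withBot, ← hd])
  intro p n hn
  have hp : p ≠ 0 := fun h => by
    rw [h, P.deg_zero] at hn
    exact WithBot.coe_ne_bot (by rw [← Nat.cast_withBot, ← hn])
  -- the coefficient map: for each i, H (ι (rep p i)) = ι b for some b
  have hmem : n ∈ (P.rep p).support := by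
    refine Finset.mem_of_max ?_
    rw [← Nat.cast_withBot]; exact hn
  have hbound : ∀ i ∈ (P.rep p).support, i ≤ n := by
    intro i hi
    have h4 := le_trans (Finset.le_max hi) hn.le
    rw [Nat.cast_withBot] at h4
    exact WithBot.coe_le_coe.1 h4
  -- head term
  obtain ⟨b, hb⟩ := hres (P.rep p n)
  have hbne : b ≠ 0 := by
    intro h
    rw [h, map_zero] at hb
    have := P.coeff_deg_ne_zero hn
    exact this (by
      have := congrArg H.symm hb
      rw [RingEquiv.symm_apply_apply, map_zero] at this
      exact RingHom.injective P.ι (this.trans (map_zero P.ι).symm))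
  have hhead : P.deg (H (P.ι (P.rep p n)) * (H P.t) ^ n) = ((d * n : ℕ) : WithBot ℕ) := by
    rw [hb, P.deg_mul (P.iota_ne_zero hbne) (P.deg_pow hHt hd n).2,
      P.deg_iota hbne, (P.deg_pow hHt hd n).1, zero_add]
  rcases Nat.eq_zero_or_pos n with hn0 | hn0
  · subst hn0
    obtain ⟨c, hc⟩ := P.eq_iota_of_deg_le_zero hn.le
    obtain ⟨e, he⟩ := hres c
    rw [hc, he]
    have hcne : c ≠ 0 := fun h => by
      rw [h, map_zero] at hc
      exact hp hc
    have hene : e ≠ 0 := by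
      intro h
      rw [h, map_zero] at he
      have := congrArg H.symm he
      rw [RingEquiv.symm_apply_apply, map_zero] at this
      exact hcne (RingHom.injective P.ι (this.trans (map_zero P.ι).symm))
    rw [P.deg_iota hene]
    simp
  · -- n ≥ 1
    rw [P.map_eq_sum H p, ← Finset.add_sum_erase _ _ hmem]
    have htail : P.deg (∑ i ∈ (P.rep p).support.erase n, H (P.ι (P.rep p i)) * (H P.t) ^ i)
        ≤ ((d * n - 1 : ℕ) : WithBot ℕ) := by
      refine P.deg_sum_le _ _ fun i hi => ?_
      obtain ⟨bi, hbi⟩ := hres (P.rep p i)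
      rw [hbi]
      refine le_trans (P.deg_iota_mul_le _ _) ?_
      rw [(P.deg_pow hHt hd i).1]
      have hilt : i < n :=
        lt_of_le_of_ne (hbound i (Finset.mem_of_mem_erase hi)) (Finset.ne_of_mem_erase hi)
      have h5 : d * i ≤ d * (n - 1) := Nat.mul_le_mul_left d (by omega)
      have h6 : d * n = d * (n - 1) + d := by
        have hn' : n = (n - 1) + 1 := by omega
        conv_lhs => rw [hn']
        rw [Nat.mul_succ]
      have h7 : d * i ≤ d * n - 1 := by omega
      exact_mod_cast h7
    have hlt2 : P.deg (∑ i ∈ (P.rep p).support.erase n, H (P.ι (P.rep p i)) * (H P.t) ^ i)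
        < P.deg (H (P.ι (P.rep p n)) * (H P.t) ^ n) := by
      rw [hhead]
      refine lt_of_le_of_lt htail ?_
      have h8 : d * n - 1 < d * n := Nat.sub_lt (by positivity) Nat.one_pos
      exact_mod_cast h8
    rw [P.deg_add_eq hlt2, hhead]

lemma deg_map (H : P.carrier ≃+* P.carrier)
    (hres : ∀ a : D, ∃ b : D, H (P.ι a) = P.ι b)
    (hres' : ∀ b : D, ∃ a : D, H (P.ι a) = P.ι b) :
    ∀ p, P.deg (H p) = P.deg p := by
  have hHt : H P.t ≠ 0 := fun h => P.t_ne_zero (by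
    have := congrArg H.symm h
    rwa [RingEquiv.symm_apply_apply, map_zero] at this)
  have hres2 : ∀ a : D, ∃ b : D, H.symm (P.ι a) = P.ι b := by
    intro a
    obtain ⟨x, hx⟩ := hres' a
    exact ⟨x, by rw [← hx, RingEquiv.symm_apply_apply]⟩
  have hHst : (H.symm : P.carrier ≃+* P.carrier) P.t ≠ 0 := fun h => P.t_ne_zero (by
    have := congrArg H h
    rwa [RingEquiv.apply_symm_apply, map_zero] at this)
  obtain ⟨d, hd⟩ := P.exists_deg_eq hHt
  obtain ⟨d', hd'⟩ := P.exists_deg_eq hHst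
  have hd1 : 1 ≤ d := by
    have := P.deg_map_t_pos H hres
    rw [hd] at this
    exact_mod_cast this
  have hd1' : 1 ≤ d' := by
    have := P.deg_map_t_pos H.symm hres2
    rw [hd'] at this
    exact_mod_cast this
  have hdegt : P.deg P.t = ((1 : ℕ) : WithBot ℕ) := by rw [P.deg_t]; norm_num
  have h1 : P.deg (H.symm P.t) = ((d' * 1 : ℕ) : WithBot ℕ) :=
    P.deg_map_aux H.symm hres2 hd' hd1' P.t 1 hdegt
  have h2 : P.deg (H (H.symm P.t)) = ((d * (d' * 1) : ℕ) : WithBot ℕ) :=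
    P.deg_map_aux H hres hd hd1 _ _ h1
  rw [RingEquiv.apply_symm_apply, hdegt] at h2
  have hdd : d * (d' * 1) = 1 := by exact_mod_cast h2.symm
  have hdeq : d = 1 := Nat.eq_one_of_mul_eq_one_right (by rw [mul_one] at hdd; exact hdd : d * d' = 1)
  intro p
  by_cases hp : p = 0
  · rw [hp, map_zero]
  · obtain ⟨n, hn⟩ := P.exists_deg_eq hp
    rw [hn, P.deg_map_aux H hres hd hd1 p n hn, hdeq, one_mul]

end DiffPolyRing


/-- a ring automorphism `H` of `D[t;δ]` restricting to an automorphism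
of `D` induces an isomorphism `S_f ≅ S_{H(f)}` via `g ↦ H(g) mod_r H(f)`; if moreover
`H(f) = f` it induces an automorphism of `S_f`. -/
theorem automorphism_induces_iso_Sf
    (D : Type*) [DivisionRing D] (δ : D → D)
    (hadd : ∀ a b : D, δ (a + b) = δ a + δ b)
    (hmul : ∀ a b : D, δ (a * b) = a * δ b + δ a * b)
    (P : DiffPolyRing D δ) (H : P.carrier ≃+* P.carrier)
    (hres : ∀ a : D, ∃ b : D, H (P.ι a) = P.ι b)
    (hres' : ∀ b : D, ∃ a : D, H (P.ι a) = P.ι b)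
    (f : P.carrier) (hm : (1 : WithBot ℕ) ≤ P.deg f)
    (modf : P.carrier → P.carrier)
    (hmodf : ∀ g : P.carrier, P.deg (modf g) < P.deg f ∧ ∃ q, g = q * f + modf g)
    (modf' : P.carrier → P.carrier)
    (hmodf' : ∀ g : P.carrier,
      P.deg (modf' g) < P.deg (H f) ∧ ∃ q, g = q * H f + modf' g) :
    (Set.BijOn (fun g => modf' (H g))
        {g : P.carrier | P.deg g < P.deg f} {g : P.carrier | P.deg g < P.deg (H f)}) ∧
    (∀ g h : P.carrier, modf' (H (g + h)) = modf' (H g) + modf' (H h)) ∧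
    (modf' (H 1) = 1) ∧
    (∀ g h : P.carrier, P.deg g < P.deg f → P.deg h < P.deg f →
      modf' (H (modf (g * h))) = modf' (modf' (H g) * modf' (H h))) ∧
    (H f = f → ∀ g : P.carrier, modf' g = modf g) := by
  have hdegmap := P.deg_map H hres hres'
  have hHf : P.deg (H f) = P.deg f := hdegmap f
  have uniq : ∀ (g q r : P.carrier), P.deg r < P.deg f → g = q * f + r → modf g = r :=
    fun g q r hr he => P.mod_unique modf hmodf hr he
  have uniq' : ∀ (g q r : P.carrier), P.deg r < P.deg (H f) → g = q * H f + r →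
      modf' g = r :=
    fun g q r hr he => P.mod_unique modf' hmodf' hr he
  have modfix : ∀ g : P.carrier, P.deg g < P.deg f → modf' (H g) = H g := by
    intro g hg
    refine uniq' (H g) 0 (H g) ?_ (by rw [zero_mul, zero_add])
    rw [hdegmap g, hHf]
    exact hg
  refine ⟨⟨fun g _ => (hmodf' (H g)).1, fun g hg h hh heq => ?_, fun y hy => ?_⟩,
    fun g h => ?_, ?_, fun g h hg hh => ?_, fun hfix g => ?_⟩
  · -- InjOn
    simp only at heq
    rw [modfix g hg, modfix h hh] at heq
    exact H.injective heq
  · -- SurjOn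
    obtain ⟨q, he⟩ := (hmodf (H.symm y)).2
    refine ⟨modf (H.symm y), (hmodf (H.symm y)).1, ?_⟩
    have hy' : P.deg y < P.deg (H f) := hy
    have hEq : y = H q * H f + H (modf (H.symm y)) := by
      have := congrArg H he
      rwa [RingEquiv.apply_symm_apply, map_add, map_mul] at this
    have h2 : H (modf (H.symm y)) = -(H q) * H f + y := by
      rw [neg_mul]
      exact eq_neg_add_of_add_eq hEq.symm
    exact uniq' _ _ _ hy' h2
  · -- additivity
    obtain ⟨q1, e1⟩ := (hmodf' (H g)).2
    obtain ⟨q2, e2⟩ := (hmodf' (H h)).2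
    refine uniq' _ (q1 + q2) _ ?_ ?_
    · exact lt_of_le_of_lt (P.deg_add_le _ _) (max_lt (hmodf' (H g)).1 (hmodf' (H h)).1)
    · rw [map_add, add_mul]
      calc H g + H h = (q1 * H f + modf' (H g)) + (q2 * H f + modf' (H h)) := by
            rw [← e1, ← e2]
        _ = q1 * H f + q2 * H f + (modf' (H g) + modf' (H h)) := by abel
  · -- one
    refine uniq' _ 0 _ ?_ (by rw [map_one, zero_mul, zero_add])
    rw [P.deg_one, hHf]
    exact lt_of_lt_of_le (by exact_mod_cast Nat.zero_lt_one) hm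
  · -- multiplicativity
    rw [modfix g hg, modfix h hh]
    obtain ⟨q, he⟩ := (hmodf (g * h)).2
    obtain ⟨Q, heQ⟩ := (hmodf' (H g * H h)).2
    have h3 : Q * H f + modf' (H g * H h) = H q * H f + H (modf (g * h)) := by
      rw [← heQ, ← map_mul]
      conv_lhs => rw [he, map_add, map_mul]
    have h4 : H (modf (g * h)) = Q * H f + modf' (H g * H h) - H q * H f := by
      rw [h3]; noncomm_ring
    have h1 : H (modf (g * h)) = (Q - H q) * H f + modf' (H g * H h) := by
      rw [h4, sub_mul]; noncomm_ring
    exact uniq' _ _ _ (hmodf' (H g * H h)).1 h1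
  · -- H f = f case
    obtain ⟨q, he⟩ := (hmodf' g).2
    rw [hfix] at he
    have hd := (hmodf' g).1
    rw [hfix] at hd
    exact (uniq g q (modf' g) hd he).symm
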